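/- arXiv:2007.11707 — 2 statements merged into one kernel-verified Lean document; each statement's English description precedes it below -/
import Mathlib

section
/- For each m ∈ [k] and j ∈ [N], the variance of â_j = (N/k)·((e^ε+2^k-1)/(e^ε-1))·sum_{m=1}^k q̃_m·1{j = s_m} satisfies Var(â_j) ≤ C·((e^ε+2^k-1)/(e^ε-1))^2·(1/N + 1/k), where |q̃_m| = c/√d almost surely, s_1,...,s_k i.i.d. uniform on [N], and N = Θ(d). -/
open MeasureTheory ProbabilityTheory
open scoped ENNReal

/-- In the SQKR scheme (`|qt m| = c/√d` a.s., `s 1, …, s k` i.i.d. uniform on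
`[N]`, `N = Θ(d)`), the variance of
`â j = (N/k) · ((e^ε+2^k-1)/(e^ε-1)) · ∑ m, qt m · 1{j = s m}` satisfies
`Var(â j) ≤ C · ((e^ε+2^k-1)/(e^ε-1))² · (1/N + 1/k)` for a constant `C` depending only on
the Kashin constants `c, c'`. -/
theorem sqkr_coefficient_variance (c c' : ℝ) (hc : 0 < c) (hc' : 1 ≤ c') :
    ∃ C > 0, ∀ (Ω : Type) [MeasureSpace Ω] [IsProbabilityMeasure (volume : Measure Ω)]
      (d N k : ℕ), 1 ≤ d → 1 ≤ k → (d : ℝ) ≤ N → (N : ℝ) ≤ c' * d →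
      ∀ ε : ℝ, 0 < ε →
      ∀ (s : Fin k → Ω → Fin N) (qt : Fin k → Ω → ℝ),
        (∀ m, Measurable (s m)) → (∀ m, Measurable (qt m)) →
        (∀ m ω, |qt m ω| = c / Real.sqrt d) →
        iIndepFun s volume →
        (∀ (m : Fin k) (i : Fin N), volume {ω | s m ω = i} = ((N : ℝ≥0∞))⁻¹) →
      ∀ j : Fin N,
        variance (fun ω => ((N : ℝ) / k) * ((Real.exp ε + 2 ^ k - 1) / (Real.exp ε - 1)) *
            ∑ m, qt m ω * (if s m ω = j then 1 else 0)) volume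
          ≤ C * ((Real.exp ε + 2 ^ k - 1) / (Real.exp ε - 1)) ^ 2 * (1 / N + 1 / k) := by
  refine ⟨c ^ 2 * c', by positivity, ?_⟩
  intro Ω _ _ d N k hd hk hdN hNd ε hε s qt hsm hqm hqabs hindep hunif j
  set A : ℝ := (Real.exp ε + 2 ^ k - 1) / (Real.exp ε - 1) with hA
  set K : ℝ := (N : ℝ) / k * A with hK
  -- basic positivity
  have hd0 : (0 : ℝ) < d := by exact_mod_cast hd
  have hk0 : (0 : ℝ) < k := by exact_mod_cast hk
  have hN0 : (0 : ℝ) < N := lt_of_lt_of_le hd0 hdN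
  have hNnat : N ≠ 0 := (Nat.cast_pos.mp hN0).ne'
  -- indicator functions
  set I : Fin k → Ω → ℝ := fun m ω => if s m ω = j then 1 else 0 with hI
  have hIset : ∀ m, MeasurableSet {ω | s m ω = j} := fun m =>
    (hsm m) (MeasurableSet.singleton j)
  have hImeas : ∀ m, Measurable (I m) := fun m =>
    Measurable.ite (hIset m) measurable_const measurable_const
  have hInonneg : ∀ m ω, 0 ≤ I m ω := by
    intro m ω; simp only [hI]; split <;> norm_num
  set S : Ω → ℝ := fun ω => ∑ m, qt m ω * I m ω with hS
  set B : Ω → ℝ := fun ω => ∑ m, I m ω with hB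
  have hSmeas : Measurable S :=
    Finset.measurable_sum _ fun m _ => (hqm m).mul (hImeas m)
  -- pointwise bound S² ≤ (c²/d) B²
  have hsqrtd : Real.sqrt d > 0 := Real.sqrt_pos.mpr hd0
  have hSB : ∀ ω, S ω ^ 2 ≤ c ^ 2 / d * B ω ^ 2 := by
    intro ω
    have h1 : |S ω| ≤ c / Real.sqrt d * B ω := by
      calc |S ω| ≤ ∑ m, |qt m ω * I m ω| := Finset.abs_sum_le_sum_abs _ _
        _ = ∑ m, c / Real.sqrt d * I m ω := by
            refine Finset.sum_congr rfl fun m _ => ?_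
            rw [abs_mul, hqabs m ω, abs_of_nonneg (hInonneg m ω)]
        _ = c / Real.sqrt d * B ω := by rw [hB, Finset.mul_sum]
    have h2 : S ω ^ 2 ≤ (c / Real.sqrt d * B ω) ^ 2 := by
      rw [← sq_abs (S ω)]
      exact pow_le_pow_left₀ (abs_nonneg _) h1 2
    calc S ω ^ 2 ≤ (c / Real.sqrt d * B ω) ^ 2 := h2
      _ = c ^ 2 / (Real.sqrt d) ^ 2 * B ω ^ 2 := by ring
      _ = c ^ 2 / d * B ω ^ 2 := by rw [Real.sq_sqrt hd0.le]
  -- integrability of indicator products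
  have hIint : ∀ m m', Integrable (fun ω => I m ω * I m' ω)
      (volume : Measure Ω) := by
    intro m m'
    have hb : ∀ ω, ‖I m ω * I m' ω‖ ≤ 1 := by
      intro ω
      simp only [hI]
      split <;> split <;> norm_num
    exact (integrable_const (1:ℝ)).mono'
      (((hImeas m).mul (hImeas m')).aestronglyMeasurable)
      (Filter.Eventually.of_forall hb)
  -- value of each ∫ I m * I m'
  have hIval : ∀ m m', (∫ ω, I m ω * I m' ω) ≤
      if m = m' then (1 : ℝ) / N else 1 / N ^ 2 := by
    intro m m'
    have hind : (fun ω => I m ω * I m' ω) =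
        Set.indicator ({ω | s m ω = j} ∩ {ω | s m' ω = j}) (fun _ => (1:ℝ)) := by
      funext ω
      simp only [hI, Set.indicator, Set.mem_inter_iff, Set.mem_setOf_eq]
      split <;> split <;> split <;> simp_all
    rw [hind, integral_indicator_const, smul_eq_mul, mul_one]
    · by_cases h : m = m'
      · subst h
        simp only [Set.inter_self, if_pos rfl]
        rw [measureReal_def, hunif m j]
        rw [ENNReal.toReal_inv]
        simp [one_div]
      · rw [if_neg h]
        have hIndep2 : IndepFun (s m) (s m') (volume : Measure Ω) :=
          hindep.indepFun h
        have : (volume : Measure Ω) ({ω | s m ω = j} ∩ {ω | s m' ω = j})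
            = (N : ℝ≥0∞)⁻¹ * (N : ℝ≥0∞)⁻¹ := by
          have := hIndep2.measure_inter_preimage_eq_mul {j} {j}
            (MeasurableSet.singleton j) (MeasurableSet.singleton j)
          have heq : s m ⁻¹' {j} = {ω | s m ω = j} := rfl
          have heq' : s m' ⁻¹' {j} = {ω | s m' ω = j} := rfl
          rw [heq, heq'] at this
          rw [this, hunif m j, hunif m' j]
        rw [measureReal_def, this]
        rw [ENNReal.toReal_mul, ENNReal.toReal_inv]
        simp [sq, mul_inv, one_div]
    · exact (hIset m).inter (hIset m')
  -- ∫ B² ≤ k/N + k²/N²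
  have hB2 : (fun ω => B ω ^ 2) = fun ω => ∑ m, ∑ m', I m ω * I m' ω := by
    funext ω
    rw [hB, sq, Finset.sum_mul_sum]
  have hBint : Integrable (fun ω => B ω ^ 2) (volume : Measure Ω) := by
    rw [hB2]
    exact integrable_finset_sum _ fun m _ => integrable_finset_sum _ fun m' _ => hIint m m'
  have hIntB : (∫ ω, B ω ^ 2) ≤ k / N + k ^ 2 / N ^ 2 := by
    have : (∫ ω, B ω ^ 2) = ∑ m, ∑ m', ∫ ω, I m ω * I m' ω := by
      rw [hB2]
      rw [integral_finset_sum _ fun m _ => integrable_finset_sum _ fun m' _ => hIint m m']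
      exact Finset.sum_congr rfl fun m _ => integral_finset_sum _ fun m' _ => hIint m m'
    rw [this]
    calc ∑ m, ∑ m', ∫ ω, I m ω * I m' ω
        ≤ ∑ m : Fin k, ∑ m' : Fin k, (if m = m' then (1:ℝ)/N else 1/N^2) :=
          Finset.sum_le_sum fun m _ => Finset.sum_le_sum fun m' _ => hIval m m'
      _ ≤ ∑ _m : Fin k, (1/(N:ℝ) + (k:ℝ)/(N:ℝ)^2) := by
          refine Finset.sum_le_sum fun m _ => ?_
          have h4 : ∑ m' : Fin k, (if m = m' then (1:ℝ)/N else 1/N^2)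
              ≤ ∑ m' : Fin k, ((if m = m' then (1:ℝ)/N else 0) + 1/N^2) := by
            refine Finset.sum_le_sum fun m' _ => ?_
            split <;> simp <;> positivity
          refine h4.trans (le_of_eq ?_)
          rw [Finset.sum_add_distrib, Finset.sum_ite_eq Finset.univ m (fun _ => (1:ℝ)/N)]
          simp [Finset.card_univ]
          push_cast
          ring
      _ = (k:ℝ) / N + (k:ℝ)^2 / N^2 := by
          rw [Finset.sum_const, Finset.card_univ, Fintype.card_fin, nsmul_eq_mul]
          field_simp
  -- main chain
  have hXmeas : Measurable (fun ω => K * S ω) := hSmeas.const_mul K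
  have hvar := variance_le_expectation_sq (X := fun ω => K * S ω)
    (hXmeas.aestronglyMeasurable) (μ := (volume : Measure Ω))
  have hXeq : (fun ω => ((N : ℝ) / k) * A * ∑ m, qt m ω * (if s m ω = j then 1 else 0))
      = fun ω => K * S ω := by
    funext ω; rw [hK, hS]
  rw [hXeq]
  have hExp : ∫ ω, ((fun ω => K * S ω) ^ 2) ω ≤ K ^ 2 * (c ^ 2 / d * (k / N + k ^ 2 / N ^ 2)) := by
    have h1 : ∫ ω, ((fun ω => K * S ω) ^ 2) ω = K ^ 2 * ∫ ω, S ω ^ 2 := by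
      rw [← integral_const_mul]
      congr 1; funext ω; simp [mul_pow]
    rw [h1]
    have h2 : (∫ ω, S ω ^ 2) ≤ c ^ 2 / d * (k / N + k ^ 2 / N ^ 2) := by
      have h3 : (∫ ω, S ω ^ 2) ≤ ∫ ω, c ^ 2 / d * B ω ^ 2 := by
        refine integral_mono_of_nonneg (Filter.Eventually.of_forall fun ω => sq_nonneg _)
          (hBint.const_mul _) (Filter.Eventually.of_forall fun ω => hSB ω)
      refine h3.trans ?_
      rw [integral_const_mul]
      exact mul_le_mul_of_nonneg_left hIntB (by positivity)
    exact mul_le_mul_of_nonneg_left h2 (sq_nonneg _)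
  refine (hvar.trans hExp).trans ?_
  -- final arithmetic
  rw [hK]
  have hA2 : (0:ℝ) ≤ A ^ 2 := sq_nonneg _
  have key : ((N:ℝ)/k) ^ 2 * (c ^ 2 / d * (k / N + k ^ 2 / N ^ 2))
      ≤ c ^ 2 * c' * (1 / N + 1 / k) := by
    have e1 : ((N:ℝ)/k) ^ 2 * (c ^ 2 / d * (k / N + k ^ 2 / N ^ 2))
        = c ^ 2 * (N / (k * d) + 1 / d) := by field_simp
    rw [e1]
    have h1 : (N:ℝ) / (k * d) ≤ c' / k := by
      rw [div_le_div_iff₀ (by positivity) hk0]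
      calc (N:ℝ) * k ≤ c' * d * k := by nlinarith
        _ = c' * (k * d) := by ring
    have h2 : (1:ℝ) / d ≤ c' / N := by
      rw [div_le_div_iff₀ hd0 hN0]
      linarith
    calc c ^ 2 * ((N:ℝ) / (k * d) + 1 / d) ≤ c ^ 2 * (c' / k + c' / N) :=
          mul_le_mul_of_nonneg_left (add_le_add h1 h2) (sq_nonneg c)
      _ = c ^ 2 * c' * (1 / N + 1 / k) := by ring
  calc ((N:ℝ)/k * A) ^ 2 * (c ^ 2 / d * (k / N + k ^ 2 / N ^ 2))
      = ((N:ℝ)/k) ^ 2 * (c ^ 2 / d * (k / N + k ^ 2 / N ^ 2)) * A ^ 2 := by ring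
    _ ≤ c ^ 2 * c' * (1 / N + 1 / k) * A ^ 2 := mul_le_mul_of_nonneg_right key hA2
    _ = c ^ 2 * c' * A ^ 2 * (1 / N + 1 / k) := by ring
end

section
/- In the RHR scheme, the estimator Ŷ_i defined by Ŷ_i(r') = (1/2^{k-1})·(H_{2^{k-1}})_{m'}·((e^ε+2^k-1)/(e^ε-1))·Q̃_i if r' ≡ r_i (mod B) (with r' = (m'-1)B + r_i) and Ŷ_i(r') = 0 otherwise, is an unbiased estimator of (1/d) H_d X_i, where the expectation is over the uniform index r_i ∈ [B] and the 2^k-randomized response producing Q̃_i. -/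
open MeasureTheory
open scoped ENNReal

/-- The Sylvester-type Walsh–Hadamard matrix `H_{2^m}`. -/
def Hadamard : (m : ℕ) → Matrix (Fin (2 ^ m)) (Fin (2 ^ m)) ℝ
  | 0 => fun _ _ => 1
  | m + 1 =>
    Matrix.reindex
      (finSumFinEquiv.trans (finCongr (by ring : 2 ^ m + 2 ^ m = 2 ^ (m + 1))))
      (finSumFinEquiv.trans (finCongr (by ring : 2 ^ m + 2 ^ m = 2 ^ (m + 1))))
      (Matrix.fromBlocks (Hadamard m) (Hadamard m) (Hadamard m) (-(Hadamard m)))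

/-- ℕ-indexed Hadamard entry. -/
def Hent : ℕ → ℕ → ℕ → ℝ
  | 0, _, _ => 1
  | m + 1, i, j =>
      (if 2 ^ m ≤ i ∧ 2 ^ m ≤ j then -1 else 1) * Hent m (i % 2 ^ m) (j % 2 ^ m)

lemma finSumFin_symm (n : ℕ) (x : Fin (n + n)) :
    finSumFinEquiv.symm x =
      if h : (x : ℕ) < n then Sum.inl ⟨x, h⟩ else Sum.inr ⟨(x : ℕ) - n, by omega⟩ := by
  rcases lt_or_ge (x : ℕ) n with h | h
  · rw [dif_pos h, Equiv.symm_apply_eq]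
    apply Fin.ext; simp
  · rw [dif_neg (by omega), Equiv.symm_apply_eq]
    apply Fin.ext; simp; omega

lemma hadamard_eq_hent : ∀ m (i j : Fin (2 ^ m)), Hadamard m i j = Hent m (i : ℕ) (j : ℕ) := by
  intro m
  induction m with
  | zero => intro i j; simp [Hadamard, Hent]
  | succ m IH =>
    intro i j
    have h2 : 0 < 2 ^ m := Nat.pow_pos (by norm_num)
    have hi := i.isLt
    have hj := j.isLt
    have hpow : 2 ^ (m + 1) = 2 ^ m + 2 ^ m := by ring
    simp only [Hadamard, Matrix.reindex_apply, Matrix.submatrix_apply, Equiv.symm_trans_apply,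
      finCongr_symm, finCongr_apply]
    rw [finSumFin_symm, finSumFin_symm]
    simp only [Fin.coe_cast]
    simp only [Hent]
    have hmod : ∀ x : ℕ, x < 2 ^ (m + 1) → 2 ^ m ≤ x → x % 2 ^ m = x - 2 ^ m := by
      intro x hx h
      rw [Nat.mod_eq_sub_mod h, Nat.mod_eq_of_lt (by omega)]
    rcases lt_or_ge (i : ℕ) (2 ^ m) with h1 | h1 <;> rcases lt_or_ge (j : ℕ) (2 ^ m) with h3 | h3
    · rw [dif_pos h1, dif_pos h3]
      simp only [Matrix.fromBlocks_apply₁₁, IH]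
      rw [if_neg (by omega), Nat.mod_eq_of_lt h1, Nat.mod_eq_of_lt h3, one_mul]
    · rw [dif_pos h1, dif_neg (by omega)]
      simp only [Matrix.fromBlocks_apply₁₂, IH]
      rw [if_neg (by omega), Nat.mod_eq_of_lt h1, one_mul]
      rw [hmod _ hj h3]
    · rw [dif_neg (by omega), dif_pos h3]
      simp only [Matrix.fromBlocks_apply₂₁, IH]
      rw [if_neg (by omega), Nat.mod_eq_of_lt h3, one_mul, hmod _ hi h1]
    · rw [dif_neg (by omega), dif_neg (by omega)]
      simp only [Matrix.fromBlocks_apply₂₂, Matrix.neg_apply, IH]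
      rw [if_pos ⟨h1, h3⟩]
      rw [hmod _ hi h1, hmod _ hj h3]
      ring

lemma hent_tensor : ∀ (a b ih jh il jl : ℕ), ih < 2 ^ a → jh < 2 ^ a → il < 2 ^ b → jl < 2 ^ b →
    Hent (a + b) (il + 2 ^ b * ih) (jl + 2 ^ b * jh) = Hent a ih jh * Hent b il jl := by
  intro a
  induction a with
  | zero =>
    intro b ih jh il jl h1 h2 h3 h4
    have : ih = 0 := by omega
    subst this
    have : jh = 0 := by omega
    subst this
    simp [Hent]
  | succ a IH =>
    intro b ih jh il jl h1 h2 h3 h4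
    have hb : 0 < 2 ^ b := Nat.pow_pos (by norm_num)
    have ha : 0 < 2 ^ a := Nat.pow_pos (by norm_num)
    have hab : a + 1 + b = (a + b) + 1 := by omega
    have hpow : 2 ^ (a + b) = 2 ^ b * 2 ^ a := by rw [pow_add]; ring
    have key : ∀ x xh : ℕ, xh < 2 ^ (a + 1) → x < 2 ^ b →
        (x + 2 ^ b * xh) % 2 ^ (a + b) = x + 2 ^ b * (xh % 2 ^ a) ∧
        (2 ^ (a + b) ≤ x + 2 ^ b * xh ↔ 2 ^ a ≤ xh) := by
      intro x xh hxh hx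
      have hd : xh % 2 ^ a + 2 ^ a * (xh / 2 ^ a) = xh := Nat.mod_add_div xh (2 ^ a)
      have hm : xh % 2 ^ a < 2 ^ a := Nat.mod_lt _ ha
      have hrewrite : x + 2 ^ b * xh
          = (x + 2 ^ b * (xh % 2 ^ a)) + 2 ^ (a + b) * (xh / 2 ^ a) := by
        rw [hpow]; nlinarith [hd]
      constructor
      · rw [hrewrite, Nat.add_mul_mod_self_left, Nat.mod_eq_of_lt (by nlinarith)]
      · constructor
        · intro h
          by_contra hcon
          push_neg at hcon
          have : xh / 2 ^ a = 0 := Nat.div_eq_of_lt hcon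
          rw [hrewrite, this] at h
          nlinarith [Nat.mod_eq_of_lt hcon ▸ hm]
        · intro h
          calc 2 ^ (a + b) = 2 ^ b * 2 ^ a := hpow
            _ ≤ 2 ^ b * xh := by exact Nat.mul_le_mul_left _ h
            _ ≤ x + 2 ^ b * xh := Nat.le_add_left _ _
    obtain ⟨ki1, ki2⟩ := key il ih h1 h3
    obtain ⟨kj1, kj2⟩ := key jl jh h2 h4
    rw [hab]
    simp only [Hent]
    rw [ki1, kj1, IH b _ _ _ _ (Nat.mod_lt _ ha) (Nat.mod_lt _ ha) h3 h4]
    have : (2 ^ (a + b) ≤ il + 2 ^ b * ih ∧ 2 ^ (a + b) ≤ jl + 2 ^ b * jh)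
        ↔ (2 ^ a ≤ ih ∧ 2 ^ a ≤ jh) := by rw [ki2, kj2]
    rw [if_congr this rfl rfl]
    ring
/-- In the RHR scheme with `d = 2^mm`, `B = d/2^(k-1)`, one-hot data `X`,
uniform public index `r`, and `2^k`-randomized-response output `Q̃` satisfying
`E[Q̃ | r = r₀] · ℙ(r = r₀) = ((e^ε-1)/(e^ε+2^k-1)) · Q(X, r₀) / B` where
`Q(X, r₀) l = (H_B)_{r₀} · X^{(l)}`, the estimator `Ŷ` defined by
`Ŷ(j') = (1/2^(k-1)) · λ · (H_{2^(k-1)})_{m'} · Q̃` when `j' = e (m', r)` and `0` otherwise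
(with `λ = (e^ε+2^k-1)/(e^ε-1)`) is an unbiased estimator of `(1/d) H_d X`. -/
theorem rhr_estimator_unbiased
    {Ω : Type*} [MeasureSpace Ω] [IsProbabilityMeasure (volume : Measure Ω)]
    (mm k : ℕ) (hk : 1 ≤ k) (hkm : k ≤ mm) (ε : ℝ) (hε : 0 < ε)
    (e : Fin (2 ^ (k - 1)) × Fin (2 ^ (mm - (k - 1))) ≃ Fin (2 ^ mm))
    (he : ∀ p : Fin (2 ^ (k - 1)) × Fin (2 ^ (mm - (k - 1))),
      ((e p : Fin (2 ^ mm)) : ℕ) = (p.2 : ℕ) + 2 ^ (mm - (k - 1)) * (p.1 : ℕ))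
    (s : Fin (2 ^ mm)) (X : Fin (2 ^ mm) → ℝ)
    (hX : X = fun t => if t = s then (1 : ℝ) else 0)
    (r : Ω → Fin (2 ^ (mm - (k - 1)))) (hr : Measurable r)
    (hrunif : ∀ r₀, volume {ω | r ω = r₀} = (((2 ^ (mm - (k - 1)) : ℕ) : ℝ≥0∞))⁻¹)
    (Qt : Ω → Fin (2 ^ (k - 1)) → ℝ)
    (hQmeas : ∀ l, Measurable fun ω => Qt ω l)
    (hQint : ∀ l, Integrable fun ω => Qt ω l)
    (hQcond : ∀ (r₀ : Fin (2 ^ (mm - (k - 1)))) (l : Fin (2 ^ (k - 1))),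
      (∫ ω, (if r ω = r₀ then Qt ω l else 0))
        = ((Real.exp ε - 1) / (Real.exp ε + 2 ^ k - 1)) *
            (∑ t, Hadamard (mm - (k - 1)) r₀ t * X (e (l, t))) / (2 ^ (mm - (k - 1)) : ℕ))
    (Yhat : Ω → Fin (2 ^ mm) → ℝ)
    (hYhat : ∀ ω j', Yhat ω j' =
      if (e.symm j').2 = r ω then
        (1 / (2 ^ (k - 1) : ℝ)) * ((Real.exp ε + 2 ^ k - 1) / (Real.exp ε - 1)) *
          ∑ l, Hadamard (k - 1) (e.symm j').1 l * Qt ω l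
      else 0) :
    ∀ j' : Fin (2 ^ mm),
      (∫ ω, Yhat ω j') = (1 / (2 ^ mm : ℝ)) * ∑ t, Hadamard mm j' t * X t := by
  intro j'
  have hab : (k - 1) + (mm - (k - 1)) = mm := by omega
  set m' := (e.symm j').1 with hm'
  set r₀ := (e.symm j').2 with hr₀
  set ρ := (Real.exp ε - 1) / (Real.exp ε + 2 ^ k - 1) with hρdef
  set c := (1 / (2 ^ (k - 1) : ℝ)) * ((Real.exp ε + 2 ^ k - 1) / (Real.exp ε - 1)) with hcdef
  -- pointwise rewriting of the estimator
  have hY : ∀ ω, Yhat ω j' =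
      ∑ l, (c * Hadamard (k - 1) m' l) * (if r ω = r₀ then Qt ω l else 0) := by
    intro ω
    rw [hYhat]
    by_cases h : r ω = r₀
    · rw [if_pos h.symm, Finset.mul_sum]
      refine Finset.sum_congr rfl fun l _ => ?_
      rw [if_pos h]; ring
    · rw [if_neg fun hh => h hh.symm]
      exact (Finset.sum_eq_zero fun l _ => by rw [if_neg h, mul_zero]).symm
  have hint : ∀ l : Fin (2 ^ (k - 1)), Integrable (fun ω => if r ω = r₀ then Qt ω l else 0) := by
    intro l
    have heq : (fun ω => if r ω = r₀ then Qt ω l else 0)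
        = (r ⁻¹' {r₀}).indicator (fun ω => Qt ω l) := by
      ext ω
      by_cases h : r ω = r₀ <;> simp [Set.indicator_apply, Set.mem_preimage, h]
    rw [heq]
    exact (hQint l).indicator (hr (measurableSet_singleton _))
  have step1 : (∫ ω, Yhat ω j')
      = ∑ l, (c * Hadamard (k - 1) m' l) * ∫ ω, (if r ω = r₀ then Qt ω l else 0) := by
    simp only [hY]
    rw [integral_finset_sum _ fun l _ => (hint l).const_mul _]
    exact Finset.sum_congr rfl fun l _ => integral_const_mul _ _
  rw [step1]
  simp only [hQcond]
  -- index decomposition of j'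
  have hj'eq : ((j' : Fin (2 ^ mm)) : ℕ) = (r₀ : ℕ) + 2 ^ (mm - (k - 1)) * (m' : ℕ) := by
    have h := he (e.symm j')
    rwa [Equiv.apply_symm_apply] at h
  have hkey : ∀ (l : Fin (2 ^ (k - 1))) (t : Fin (2 ^ (mm - (k - 1)))),
      Hadamard mm j' (e (l, t)) = Hadamard (k - 1) m' l * Hadamard (mm - (k - 1)) r₀ t := by
    intro l t
    rw [hadamard_eq_hent, hadamard_eq_hent, hadamard_eq_hent, hj'eq, he (l, t)]
    have hm : Hent mm = Hent ((k - 1) + (mm - (k - 1))) := by rw [hab]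
    rw [hm]
    exact hent_tensor (k - 1) (mm - (k - 1)) m' l r₀ t m'.isLt l.isLt r₀.isLt t.isLt
  have hRHS : ∑ t, Hadamard mm j' t * X t
      = ∑ l, ∑ t, Hadamard (k - 1) m' l * (Hadamard (mm - (k - 1)) r₀ t * X (e (l, t))) := by
    rw [← e.sum_comp (fun t => Hadamard mm j' t * X t), Fintype.sum_prod_type]
    refine Finset.sum_congr rfl fun l _ => Finset.sum_congr rfl fun t _ => ?_
    rw [hkey, mul_assoc]
  -- constants
  have hexp : 1 < Real.exp ε := by
    rw [← Real.exp_zero]; exact Real.exp_lt_exp.mpr hε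
  have hkpos : (0 : ℝ) < 2 ^ k := by positivity
  have hE1 : Real.exp ε - 1 ≠ 0 := by linarith
  have hE2 : Real.exp ε + 2 ^ k - 1 ≠ 0 := by nlinarith
  have hNne : ((2 ^ (mm - (k - 1)) : ℕ) : ℝ) ≠ 0 := by positivity
  have hfactor : c * ρ / ((2 ^ (mm - (k - 1)) : ℕ) : ℝ) = 1 / (2 ^ mm : ℝ) := by
    have hcast : ((2 ^ (mm - (k - 1)) : ℕ) : ℝ) = (2 : ℝ) ^ (mm - (k - 1)) := by push_cast; ring
    have h2 : (2 : ℝ) ^ mm = 2 ^ (k - 1) * 2 ^ (mm - (k - 1)) := by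
      rw [← pow_add, hab]
    rw [hcdef, hρdef, hcast, h2]
    field_simp
  have hterm : ∀ l : Fin (2 ^ (k - 1)),
      (c * Hadamard (k - 1) m' l) * (ρ * (∑ t, Hadamard (mm - (k - 1)) r₀ t * X (e (l, t))) / ((2 ^ (mm - (k - 1)) : ℕ) : ℝ))
      = (1 / (2 ^ mm : ℝ)) * ∑ t, Hadamard (k - 1) m' l * (Hadamard (mm - (k - 1)) r₀ t * X (e (l, t))) := by
    intro l
    rw [← Finset.mul_sum]
    rw [show (c * Hadamard (k - 1) m' l) * (ρ * (∑ t, Hadamard (mm - (k - 1)) r₀ t * X (e (l, t))) / ((2 ^ (mm - (k - 1)) : ℕ) : ℝ))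
        = (c * ρ / ((2 ^ (mm - (k - 1)) : ℕ) : ℝ)) *
            (Hadamard (k - 1) m' l * ∑ t, Hadamard (mm - (k - 1)) r₀ t * X (e (l, t))) from by ring, hfactor]
  calc ∑ l, (c * Hadamard (k - 1) m' l) *
        (ρ * (∑ t, Hadamard (mm - (k - 1)) r₀ t * X (e (l, t))) / ((2 ^ (mm - (k - 1)) : ℕ) : ℝ))
      = ∑ l, (1 / (2 ^ mm : ℝ)) *
          ∑ t, Hadamard (k - 1) m' l * (Hadamard (mm - (k - 1)) r₀ t * X (e (l, t))) :=
        Finset.sum_congr rfl fun l _ => hterm l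
    _ = (1 / (2 ^ mm : ℝ)) *
          ∑ l, ∑ t, Hadamard (k - 1) m' l * (Hadamard (mm - (k - 1)) r₀ t * X (e (l, t))) :=
        (Finset.mul_sum _ _ _).symm
    _ = (1 / (2 ^ mm : ℝ)) * ∑ t, Hadamard mm j' t * X t := by rw [hRHS]
end
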